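/- (Theorem 1, equation (4).) G·(1 − Σ_{n≥1} t_n·(1 + S + S² + ⋯ + S^{n−1})) = 1, where the sum is the tsum of the summable family (t_n·Σ_{k=0}^{n−1} S^k)_{n≥1}. -/

import Mathlib

/- `R = MvPowerSeries ℕ ℚ`, with the product (coefficientwise) topology. -/
noncomputable instance : TopologicalSpace (MvPowerSeries ℕ ℚ) :=
  inferInstanceAs (TopologicalSpace ((ℕ →₀ ℕ) → ℚ))

open MvPowerSeries

instance : T2Space (MvPowerSeries ℕ ℚ) :=
  inferInstanceAs (T2Space ((ℕ →₀ ℕ) → ℚ))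

instance : ContinuousAdd (MvPowerSeries ℕ ℚ) :=
  inferInstanceAs (ContinuousAdd ((ℕ →₀ ℕ) → ℚ))

instance : ContinuousMul (MvPowerSeries ℕ ℚ) := by
  constructor
  have : Continuous fun p : MvPowerSeries ℕ ℚ × MvPowerSeries ℕ ℚ =>
      ((fun d => coeff d (p.1 * p.2)) : (ℕ →₀ ℕ) → ℚ) := by
    apply continuous_pi
    intro d
    simp only [coeff_mul]
    exact continuous_finset_sum _ fun x _ =>
      ((continuous_apply x.1).comp continuous_fst).mul
        ((continuous_apply x.2).comp continuous_snd)
  exact this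

instance : IsTopologicalSemiring (MvPowerSeries ℕ ℚ) := ⟨⟩

/-- coefficientwise summability criterion -/
lemma summable_X_mul (f : ℕ → MvPowerSeries ℕ ℚ) :
    Summable fun n => (X (n + 1) : MvPowerSeries ℕ ℚ) * f n := by
  have : ∀ d : ℕ →₀ ℕ,
      Summable fun n => coeff d ((X (n + 1) : MvPowerSeries ℕ ℚ) * f n) := by
    intro d
    apply summable_of_ne_finset_zero (s := d.support.image fun i => i - 1)
    intro n hn
    have h1 : ¬ Finsupp.single (n + 1) 1 ≤ d := by
      intro h
      have : d (n + 1) ≠ 0 := by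
        have := h (n + 1)
        simp only [Finsupp.single_eq_same] at this
        omega
      exact hn (Finset.mem_image.2 ⟨n + 1, Finsupp.mem_support_iff.2 this, by simp⟩)
    rw [X_def, coeff_monomial_mul, if_neg h1]
  exact Pi.summable.2 this

lemma hasSum_coeff {f : ℕ → MvPowerSeries ℕ ℚ} (hf : Summable f) (d : ℕ →₀ ℕ) :
    HasSum (fun n => coeff d (f n)) (coeff d (∑' n, f n)) :=
  Pi.hasSum.1 hf.hasSum d

/-- `∑_{n≥1} t_n ≠ 0`. -/
lemma S1_ne_zero : (∑' n : ℕ, (X (n + 1) : MvPowerSeries ℕ ℚ)) ≠ 0 := by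
  classical
  have hsum : Summable fun n : ℕ => (X (n + 1) : MvPowerSeries ℕ ℚ) := by
    have := summable_X_mul fun _ => (1 : MvPowerSeries ℕ ℚ)
    simpa using this
  intro h
  have h2 := hasSum_coeff hsum (Finsupp.single 1 1)
  rw [h] at h2
  simp only [map_zero] at h2
  have h3 : (fun n : ℕ => coeff (Finsupp.single 1 1) (X (n + 1) : MvPowerSeries ℕ ℚ))
      = fun n => if n = 0 then (1 : ℚ) else 0 := by
    funext n
    rw [coeff_X]
    by_cases hn : n = 0
    · subst hn; simp
    · rw [if_neg, if_neg hn]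
      intro hc
      have := Finsupp.single_left_injective (one_ne_zero (α := ℕ)) hc
      omega
  rw [h3] at h2
  have h4 : HasSum (fun n : ℕ => if n = 0 then (1 : ℚ) else 0) 1 :=
    hasSum_ite_eq 0 1
  exact one_ne_zero (h2.unique h4).symm

/-- (Theorem 1, equation (4).) `G · (1 − ∑_{n ≥ 1} t_n · (1 + S + S² + ⋯ + S^{n-1})) = 1`,
where the sum is the tsum of the family `(t_n · ∑_{k=0}^{n-1} S^k)_{n ≥ 1}`
(here reindexed by `n ↦ n + 1`). -/
theorem geode_stmt5 (S G : MvPowerSeries ℕ ℚ)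
    (hS : S = 1 + ∑' n : ℕ, (X (n + 1) : MvPowerSeries ℕ ℚ) * S ^ (n + 1))
    (hG : S - 1 = G * ∑' n : ℕ, (X (n + 1) : MvPowerSeries ℕ ℚ)) :
    G * (1 - ∑' n : ℕ, (X (n + 1) : MvPowerSeries ℕ ℚ) *
      ∑ k ∈ Finset.range (n + 1), S ^ k) = 1 := by
  set S₁ : MvPowerSeries ℕ ℚ := ∑' n : ℕ, (X (n + 1) : MvPowerSeries ℕ ℚ) with hS₁
  set T : MvPowerSeries ℕ ℚ :=
    ∑' n : ℕ, (X (n + 1) : MvPowerSeries ℕ ℚ) * ∑ k ∈ Finset.range (n + 1), S ^ k with hT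
  have hB : Summable fun n : ℕ => (X (n + 1) : MvPowerSeries ℕ ℚ) := by
    have := summable_X_mul fun _ => (1 : MvPowerSeries ℕ ℚ)
    simpa using this
  have hC : Summable fun n : ℕ =>
      (X (n + 1) : MvPowerSeries ℕ ℚ) * ∑ k ∈ Finset.range (n + 1), S ^ k :=
    summable_X_mul _
  -- key identity termwise
  have hterm : ∀ n : ℕ, (X (n + 1) : MvPowerSeries ℕ ℚ) * S ^ (n + 1)
      = X (n + 1) + (S - 1) *
        ((X (n + 1) : MvPowerSeries ℕ ℚ) * ∑ k ∈ Finset.range (n + 1), S ^ k) := by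
    intro n
    have h := geom_sum_mul S (n + 1)
    have : S ^ (n + 1) = 1 + (S - 1) * ∑ k ∈ Finset.range (n + 1), S ^ k := by
      rw [mul_comm] at h
      linear_combination -h
    rw [this]
    ring
  have hsum_eq : (∑' n : ℕ, (X (n + 1) : MvPowerSeries ℕ ℚ) * S ^ (n + 1))
      = S₁ + (S - 1) * T := by
    calc (∑' n : ℕ, (X (n + 1) : MvPowerSeries ℕ ℚ) * S ^ (n + 1))
        = ∑' n : ℕ, ((X (n + 1) : MvPowerSeries ℕ ℚ) + (S - 1) *
            ((X (n + 1) : MvPowerSeries ℕ ℚ) * ∑ k ∈ Finset.range (n + 1), S ^ k)) := by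
          exact tsum_congr hterm
      _ = S₁ + ∑' n : ℕ, (S - 1) *
            ((X (n + 1) : MvPowerSeries ℕ ℚ) * ∑ k ∈ Finset.range (n + 1), S ^ k) := by
          rw [Summable.tsum_add hB (hC.mul_left _)]
      _ = S₁ + (S - 1) * T := by rw [hC.tsum_mul_left]
  -- S - 1 = S₁ + (S-1) * T
  have hmain : S - 1 = S₁ + (S - 1) * T := by
    rw [← hsum_eq]
    conv_lhs => rw [hS]
    exact add_sub_cancel_left 1 _
  rw [hG] at hmain
  -- G * (1 - T) * S₁ = S₁
  have hfin : (G * (1 - T)) * S₁ = 1 * S₁ := by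
    have : G * S₁ * T = S₁ * (G * T) := by ring
    linear_combination hmain
  exact mul_right_cancel₀ S1_ne_zero hfin
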